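/- Every nontrivial normal subgroup of L_n = (ℤ/pℤ)^n ≀ ℤ whose projection to ℤ is nontrivial has finite index in L_n. -/

import Mathlib

open Finsupp Multiplicative

/-- The base group of the lamplighter group `L_n = (ℤ/pℤ)^n ≀ ℤ`: `⊕_ℤ (ℤ/pℤ)^n`. -/
abbrev LampBase (p n : ℕ) := ℤ →₀ (Fin n → ZMod p)

/-- The shift `x^s` on the base group. -/
def lampShift (p n : ℕ) (s : ℤ) : LampBase p n ≃+ LampBase p n :=
  Finsupp.domCongr (Equiv.addRight s)

/-- The shift action of `ℤ` on the (multiplicative) base group. -/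
noncomputable def lampAct (p n : ℕ) :
    Multiplicative ℤ →* MulAut (Multiplicative (LampBase p n)) where
  toFun s := AddEquiv.toMultiplicative (lampShift p n s.toAdd)
  map_one' := by
    ext w
    simp [lampShift, Finsupp.domCongr_apply]
    rfl
  map_mul' s t := by
    ext w
    simp [lampShift, Finsupp.domCongr_apply, MulAut.mul_def, MulEquiv.trans_apply]
    simp [Finsupp.equivMapDomain_apply, Equiv.Perm.mul_def]
    all_goals ring_nf

/-- The lamplighter group `L_n = (ℤ/pℤ)^n ≀ ℤ`, realized as the semidirect
product of the base group `⊕_ℤ (ℤ/pℤ)^n` with `ℤ` acting by the shift. -/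
abbrev Lamp (p n : ℕ) :=
  SemidirectProduct (Multiplicative (LampBase p n)) (Multiplicative ℤ) (lampAct p n)

theorem lamp_shift_single (p n : ℕ) (s j : ℤ) (x : Fin n → ZMod p) :
    lampShift p n s (single j x) = single (j + s) x := by
  rw [lampShift, Finsupp.domCongr_apply, Finsupp.equivMapDomain_single]
  rfl

theorem lamp_act_toAdd (p n : ℕ) (s : ℤ) (a : Multiplicative (LampBase p n)) :
    toAdd (lampAct p n (ofAdd s) a) = lampShift p n s (toAdd a) := rfl

theorem conj_inl (p n : ℕ) (x : Lamp p n) (b : Multiplicative (LampBase p n)) :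
    x * SemidirectProduct.inl b * x⁻¹ = SemidirectProduct.inl (lampAct p n x.right b) := by
  have key : ∀ y, lampAct p n x.right (lampAct p n x.right⁻¹ y) = y := fun y => by
    rw [← MulAut.mul_apply, ← map_mul, mul_inv_cancel, map_one, MulAut.one_apply]
  ext : 1
  · show (x.left * lampAct p n x.right b) *
      lampAct p n (x.right * 1) (lampAct p n x.right⁻¹ x.left⁻¹) = _
    rw [mul_one, key, mul_inv_cancel_comm]
    rfl
  · show x.right * 1 * x.right⁻¹ = 1
    group

/-- Every normal subgroup of `L_n` with nontrivial projection to `ℤ` has finite index. -/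
theorem stmt_9 (p n : ℕ) [Fact p.Prime] (hn : 1 ≤ n)
    (V : Subgroup (Lamp p n)) [V.Normal] (hV : V ≠ ⊥)
    (hproj : Subgroup.map SemidirectProduct.rightHom V ≠ ⊥) :
    V.FiniteIndex := by
  classical
  -- Step 1: find v ∈ V whose projection to ℤ is a positive integer k.
  have hex : ∃ y ∈ Subgroup.map SemidirectProduct.rightHom V, y ≠ 1 := by
    by_contra h
    push_neg at h
    exact hproj ((Subgroup.eq_bot_iff_forall _).2 h)
  obtain ⟨y, hyV, hy1⟩ := hex
  obtain ⟨u, huV, hu⟩ := hyV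
  have hz : toAdd y ≠ 0 := fun h => hy1 (by
    have : y = ofAdd 0 := by rw [← h]; rfl
    simpa using this)
  obtain ⟨v, hvV, k, hk, hv⟩ :
      ∃ v ∈ V, ∃ k : ℕ, k ≠ 0 ∧ v.right = ofAdd (k : ℤ) := by
    rcases lt_or_gt_of_ne hz with hneg | hpos
    · refine ⟨u⁻¹, V.inv_mem huV, (toAdd y).natAbs, by omega, ?_⟩
      have h1 : toAdd (u⁻¹.right) = -(toAdd y) := by
        rw [show u⁻¹.right = (u.right)⁻¹ from rfl, show u.right = y from hu]
        rfl
      have h2 : toAdd (u⁻¹.right) = (((toAdd y).natAbs : ℕ) : ℤ) := by omega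
      calc u⁻¹.right = ofAdd (toAdd (u⁻¹.right)) := (ofAdd_toAdd _).symm
        _ = ofAdd (((toAdd y).natAbs : ℕ) : ℤ) := by rw [h2]
    · refine ⟨u, huV, (toAdd y).natAbs, by omega, ?_⟩
      have h1 : toAdd (u.right) = toAdd y := by rw [show u.right = y from hu]
      have h2 : toAdd (u.right) = (((toAdd y).natAbs : ℕ) : ℤ) := by omega
      calc u.right = ofAdd (toAdd (u.right)) := (ofAdd_toAdd _).symm
        _ = ofAdd (((toAdd y).natAbs : ℕ) : ℤ) := by rw [h2]
  haveI : NeZero k := ⟨hk⟩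
  -- Step 2: commutator elements.
  have hcomm : ∀ a : Multiplicative (LampBase p n),
      SemidirectProduct.inl (a * (lampAct p n (ofAdd (k : ℤ)) a)⁻¹) ∈ V := by
    intro a
    have h1 : (SemidirectProduct.inl a : Lamp p n) * v * (SemidirectProduct.inl a)⁻¹ ∈ V :=
      Subgroup.Normal.conj_mem ‹V.Normal› v hvV _
    have h2 := V.mul_mem h1 (V.inv_mem hvV)
    have heq : (SemidirectProduct.inl a : Lamp p n) * v * (SemidirectProduct.inl a)⁻¹ * v⁻¹ =
        SemidirectProduct.inl (a * (lampAct p n (ofAdd (k : ℤ)) a)⁻¹) := by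
      have : (SemidirectProduct.inl a : Lamp p n) * v * (SemidirectProduct.inl a)⁻¹ * v⁻¹ =
          SemidirectProduct.inl a * (v * (SemidirectProduct.inl a)⁻¹ * v⁻¹) := by group
      rw [this, ← map_inv, conj_inl, ← map_mul, hv]
      congr 1
      rw [map_inv]
    rw [heq] at h2
    exact h2
  -- Step 3: single-step relations.
  have hstep : ∀ (j : ℤ) (x : Fin n → ZMod p),
      SemidirectProduct.inl (ofAdd (single j x - single (j + (k : ℤ)) x)) ∈ V := by
    intro j x
    have := hcomm (ofAdd (single j x))
    have heq : (ofAdd (single j x) * (lampAct p n (ofAdd (k : ℤ)) (ofAdd (single j x)))⁻¹ :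
        Multiplicative (LampBase p n)) = ofAdd (single j x - single (j + (k : ℤ)) x) := by
      have h1 : toAdd (lampAct p n (ofAdd (k : ℤ)) (ofAdd (single j x))) =
          single (j + (k : ℤ)) x := by
        rw [lamp_act_toAdd]
        exact lamp_shift_single p n k j x
      rw [show (lampAct p n (ofAdd (k : ℤ)) (ofAdd (single j x))) =
        ofAdd (single (j + (k : ℤ)) x) by rw [← h1]; rfl]
      rw [ofAdd_sub, div_eq_mul_inv]
    rwa [heq] at this
  -- Step 4: all multiples of k.
  have hchain : ∀ (mm j : ℤ) (x : Fin n → ZMod p),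
      SemidirectProduct.inl (ofAdd (single j x - single (j + (k : ℤ) * mm) x)) ∈ V := by
    intro mm
    induction mm using Int.induction_on with
    | zero =>
      intro j x
      rw [mul_zero, add_zero, sub_self, ofAdd_zero, map_one]
      exact V.one_mem
    | succ i ih =>
      intro j x
      have h1 := ih j x
      have h2 := hstep (j + (k : ℤ) * i) x
      have h3 := V.mul_mem h1 h2
      rw [← map_mul] at h3
      have : (ofAdd (single j x - single (j + (k : ℤ) * i) x) *
          ofAdd (single (j + (k : ℤ) * i) x - single (j + (k : ℤ) * i + (k : ℤ)) x) :
          Multiplicative (LampBase p n)) =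
          ofAdd (single j x - single (j + (k : ℤ) * (i + 1)) x) := by
        rw [← ofAdd_add]
        congr 1
        rw [show j + (k : ℤ) * (i + 1) = j + (k : ℤ) * i + (k : ℤ) by ring]
        abel
      rwa [this] at h3
    | pred i ih =>
      intro j x
      have h1 := ih j x
      have h2 := V.inv_mem (hstep (j + (k : ℤ) * (-i - 1)) x)
      rw [← map_inv] at h2
      have h3 := V.mul_mem h1 h2
      rw [← map_mul] at h3
      have : (ofAdd (single j x - single (j + (k : ℤ) * (-i : ℤ)) x) *
          (ofAdd (single (j + (k : ℤ) * (-i - 1)) x -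
            single (j + (k : ℤ) * (-i - 1) + (k : ℤ)) x))⁻¹ :
          Multiplicative (LampBase p n)) =
          ofAdd (single j x - single (j + (k : ℤ) * (-i - 1)) x) := by
        rw [← ofAdd_neg, ← ofAdd_add]
        congr 1
        rw [show j + (k : ℤ) * (-i - 1) + (k : ℤ) = j + (k : ℤ) * (-i : ℤ) by ring]
        abel
      rwa [this] at h3
  -- The projection to residues and the representative map.
  set π : LampBase p n →+ (ZMod k →₀ (Fin n → ZMod p)) :=
    Finsupp.mapDomain.addMonoidHom (fun i : ℤ => (i : ZMod k)) with hπ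
  set ρ : ZMod k → ℤ := fun c => (c.val : ℤ) with hρ
  have hρcast : ∀ c : ZMod k, ((ρ c : ℤ) : ZMod k) = c := by
    intro c
    simp [hρ, ZMod.intCast_cast, ZMod.natCast_val, ZMod.cast_id]
  -- Step 5: reduce any single to its canonical representative.
  have hsingle_rep : ∀ (j : ℤ) (x : Fin n → ZMod p),
      SemidirectProduct.inl (ofAdd (single j x - single (ρ ((j : ZMod k))) x)) ∈ V := by
    intro j x
    have hdvd : (k : ℤ) ∣ (ρ ((j : ZMod k)) - j) := by
      rw [← ZMod.intCast_zmod_eq_zero_iff_dvd]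
      push_cast
      rw [hρcast]
      ring
    obtain ⟨mm, hmm⟩ := hdvd
    have := hchain mm j x
    rwa [show j + (k : ℤ) * mm = ρ ((j : ZMod k)) by linear_combination -hmm] at this
  -- Step 6: reduce any base element modulo V to its canonical representative.
  have hrep : ∀ b : LampBase p n,
      SemidirectProduct.inl (ofAdd (b - mapDomain (fun i : ℤ => ρ ((i : ZMod k))) b)) ∈ V := by
    intro b
    induction b using Finsupp.induction with
    | zero =>
      rw [mapDomain_zero, sub_zero, ofAdd_zero, map_one]
      exact V.one_mem
    | single_add j x f hj hx ih =>
      rw [mapDomain_add, mapDomain_single]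
      have h3 := V.mul_mem (hsingle_rep j x) ih
      rw [← map_mul, ← ofAdd_add] at h3
      have : single j x - single (ρ ((j : ZMod k))) x +
          (f - mapDomain (fun i : ℤ => ρ ((i : ZMod k))) f) =
          single j x + f - (single (ρ ((j : ZMod k))) x +
            mapDomain (fun i : ℤ => ρ ((i : ZMod k))) f) := by abel
      rwa [this] at h3
  -- Step 7: kernel of π is contained in V (as inl).
  have hker : ∀ b : LampBase p n, π b = 0 → SemidirectProduct.inl (ofAdd b) ∈ V := by
    intro b hb
    have h2 := hrep b
    have hcomp : mapDomain (fun i : ℤ => ρ ((i : ZMod k))) b = mapDomain ρ (π b) := by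
      rw [show (fun i : ℤ => ρ ((i : ZMod k))) = ρ ∘ (fun i : ℤ => (i : ZMod k)) from rfl,
        Finsupp.mapDomain_comp]
      rfl
    rw [hcomp, hb, mapDomain_zero, sub_zero] at h2
    exact h2
  -- kernel of π is shift invariant
  have hshift : ∀ (s : ℤ) (b : LampBase p n), π b = 0 → π (lampShift p n s b) = 0 := by
    intro s b hb
    have h1 : π (lampShift p n s b) =
        mapDomain (fun c : ZMod k => c + (s : ZMod k)) (π b) := by
      show mapDomain _ (equivMapDomain (Equiv.addRight s) b) = _
      rw [Finsupp.equivMapDomain_eq_mapDomain, hπ]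
      show mapDomain _ (mapDomain _ b) = mapDomain _ (mapDomain _ b)
      rw [← Finsupp.mapDomain_comp, ← Finsupp.mapDomain_comp]
      congr 1
      funext i
      show ((i + s : ℤ) : ZMod k) = (i : ZMod k) + (s : ZMod k)
      push_cast
      ring
    rw [h1, hb, mapDomain_zero]
  -- Step 8: finiteness of the quotient.
  haveI : Finite (Lamp p n ⧸ V) := by
    set Φ : ((ZMod k → (Fin n → ZMod p)) × ZMod k) → Lamp p n ⧸ V := fun t =>
      QuotientGroup.mk (SemidirectProduct.inl
          (ofAdd (mapDomain ρ (Finsupp.equivFunOnFinite.symm t.1))) *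
        SemidirectProduct.inr (ofAdd (ρ t.2))) with hΦ
    apply Finite.of_surjective Φ
    intro q
    obtain ⟨g, rfl⟩ := QuotientGroup.mk_surjective q
    set m : ℤ := toAdd g.right with hm
    set r : ZMod k := (m : ZMod k) with hr
    have hdvd : (k : ℤ) ∣ (m - ρ r) := by
      rw [← ZMod.intCast_zmod_eq_zero_iff_dvd]
      push_cast
      rw [hρcast]
      rw [hr]
      ring
    obtain ⟨q', hq'⟩ := hdvd
    set g' : Lamp p n := g * v ^ (-q') with hg'
    have hvpow : ∀ z : ℤ, (v ^ z).right = ofAdd ((k : ℤ) * z) := by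
      intro z
      have : (v ^ z).right = v.right ^ z := by
        induction z using Int.induction_on with
        | zero => simp
        | succ i ih => rw [zpow_add_one, zpow_add_one, SemidirectProduct.mul_right, ih]
        | pred i ih => rw [zpow_sub_one, zpow_sub_one, SemidirectProduct.mul_right, ih]; rfl
      rw [this, hv]
      show ofAdd (z • (k : ℤ)) = _
      rw [smul_eq_mul, mul_comm]
    have hg'right : g'.right = ofAdd (ρ r) := by
      rw [hg', SemidirectProduct.mul_right, hvpow]
      show ofAdd (m + (k : ℤ) * (-q')) = _
      congr 1
      linear_combination hq'
    have hgg' : (QuotientGroup.mk g' : Lamp p n ⧸ V) = QuotientGroup.mk g := by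
      rw [hg']
      exact QuotientGroup.mk_mul_of_mem g (Subgroup.zpow_mem V hvV (-q'))
    set t : Multiplicative ℤ := ofAdd (ρ r) with ht
    set B : Multiplicative (LampBase p n) := g'.left with hB
    refine ⟨⟨Finsupp.equivFunOnFinite (π (toAdd B)), r⟩, ?_⟩
    rw [hΦ]
    simp only [Equiv.symm_apply_apply]
    have hdecomp : SemidirectProduct.inl B * SemidirectProduct.inr t = g' := by
      rw [hB, ← hg'right]
      exact SemidirectProduct.inl_left_mul_inr_right g'
    rw [← hgg', ← hdecomp, QuotientGroup.eq]
    set C : Multiplicative (LampBase p n) := ofAdd (mapDomain ρ (π (toAdd B))) with hC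
    rw [← ht]
    have hexp : ((SemidirectProduct.inl C : Lamp p n) * SemidirectProduct.inr t)⁻¹ *
        (SemidirectProduct.inl B * SemidirectProduct.inr t) =
        SemidirectProduct.inl ((lampAct p n t)⁻¹ (C⁻¹ * B)) := by
      rw [mul_inv_rev, ← map_inv,
        show ((SemidirectProduct.inl C : Lamp p n))⁻¹ = SemidirectProduct.inl C⁻¹ from
          (map_inv _ _).symm,
        SemidirectProduct.inl_aut_inv, map_mul]
      group
    rw [hexp]
    apply hker
    have hC0 : π (toAdd (C⁻¹ * B)) = 0 := by
      have : toAdd (C⁻¹ * B) = toAdd B - mapDomain ρ (π (toAdd B)) := by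
        rw [hC]
        show -(mapDomain ρ (π (toAdd B))) + toAdd B = _
        abel
      rw [this, map_sub]
      have : π (mapDomain ρ (π (toAdd B))) = π (toAdd B) := by
        rw [hπ]
        show mapDomain _ (mapDomain _ _) = _
        rw [← Finsupp.mapDomain_comp]
        rw [show ((fun i : ℤ => (i : ZMod k)) ∘ ρ) = id from funext hρcast,
          Finsupp.mapDomain_id]
      rw [this, sub_self]
    have : toAdd ((lampAct p n t)⁻¹ (C⁻¹ * B)) =
        lampShift p n (-(ρ r)) (toAdd (C⁻¹ * B)) := by
      rw [← map_inv (lampAct p n) t, ht,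
        show ((ofAdd (ρ r) : Multiplicative ℤ))⁻¹ = ofAdd (-(ρ r)) from rfl]
      exact lamp_act_toAdd p n (-(ρ r)) (C⁻¹ * B)
    show π (toAdd ((lampAct p n t)⁻¹ (C⁻¹ * B))) = 0
    rw [this]
    exact hshift _ _ hC0
  exact Subgroup.finiteIndex_of_finite_quotient
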